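/- Let A ∈ ℝ^{n×d} have rank r and thin SVD A = UΣVᵀ with singular values σ₁ ≥ … ≥ σ_r > 0, let 1 ≤ k < r, set λ = ‖A_{k,⊥}‖_F²/k, let 1 ≤ m ≤ r satisfy σ_m² ≥ λ ≥ σ_{m+1}², and define Σ_λ = diag(σ_i/√(σ_i²+λ)), ridge leverage scores τ_i^λ = ‖(UΣ_λ)_{i*}‖₂², d_λ = Σ_i τ_i^λ, and sampling probabilities p_i = τ_i^λ/d_λ. Let W ∈ ℝ^{s×n} be the random sampling-and-rescaling matrix of Algorithm 1 built from these probabilities. Then E[(‖W A_{m,⊥}‖_F² − ‖A_{m,⊥}‖_F²)²] ≤ (8/s) ‖A_{k,⊥}‖_F⁴ and E[‖A_{m,⊥}ᵀ Wᵀ W A_{m,⊥} − A_{m,⊥}ᵀ A_{m,⊥}‖_F²] ≤ (8/s) ‖A_{k,⊥}‖_F⁴. -/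

import Mathlib

open Matrix BigOperators

noncomputable def frobNorm {m n : Type*} [Fintype m] [Fintype n]
    (A : Matrix m n ℝ) : ℝ := Real.sqrt (∑ i, ∑ j, (A i j) ^ 2)

noncomputable def specNorm {m n : ℕ} (A : Matrix (Fin m) (Fin n) ℝ) : ℝ :=
  ‖LinearMap.toContinuousLinearMap (Matrix.toEuclideanLin A)‖

noncomputable def truncDiag {r : ℕ} (σ : Fin r → ℝ) (m : ℕ) :
    Matrix (Fin r) (Fin r) ℝ :=
  Matrix.diagonal fun i => if (i : ℕ) < m then σ i else 0

noncomputable def samplingMatrix {n : ℕ} (p : Fin n → ℝ) (s : ℕ) (ω : Fin s → Fin n) :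
    Matrix (Fin s) (Fin n) ℝ :=
  fun i j => if j = ω i then 1 / Real.sqrt (s * p j) else 0

noncomputable def expec {n s : ℕ} (p : Fin n → ℝ) (f : (Fin s → Fin n) → ℝ) : ℝ :=
  ∑ ω : Fin s → Fin n, (∏ i, p (ω i)) * f ω

open Classical in
noncomputable def probOf {n s : ℕ} (p : Fin n → ℝ) (E : (Fin s → Fin n) → Prop) : ℝ :=
  ∑ ω : Fin s → Fin n, if E ω then (∏ i, p (ω i)) else 0

def firstCols {n r : ℕ} (U : Matrix (Fin n) (Fin r) ℝ) (k : ℕ) (h : k ≤ r) :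
    Matrix (Fin n) (Fin k) ℝ :=
  fun i j => U i (Fin.castLE h j)

noncomputable def ridgeDiag {r : ℕ} (σ : Fin r → ℝ) (lam : ℝ) :
    Matrix (Fin r) (Fin r) ℝ :=
  Matrix.diagonal fun i => σ i / Real.sqrt (σ i ^ 2 + lam)


lemma expec_succ {n s : ℕ} (p : Fin n → ℝ) (f : (Fin (s+1) → Fin n) → ℝ) :
    ∑ ω : Fin (s+1) → Fin n, (∏ i, p (ω i)) * f ω
      = ∑ j : Fin n, p j * ∑ ω : Fin s → Fin n,
          (∏ i, p (ω i)) * f (Fin.cons j ω) := by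
  rw [← (Fin.consEquiv (fun _ : Fin (s+1) => Fin n)).sum_comp
      (fun ω => (∏ i, p (ω i)) * f ω)]
  simp only [Fintype.sum_prod_type, Fin.consEquiv_apply]
  refine Finset.sum_congr rfl fun j _ => ?_
  rw [Finset.mul_sum]
  refine Finset.sum_congr rfl fun ω _ => ?_
  rw [Fin.prod_univ_succ]
  simp only [Fin.cons_zero, Fin.cons_succ, mul_assoc]
  rfl

lemma sum_prod_one {n s : ℕ} (p : Fin n → ℝ) (hp1 : ∑ j, p j = 1) :
    ∑ ω : Fin s → Fin n, ∏ i, p (ω i) = 1 := by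
  induction s with
  | zero => simp
  | succ s ih =>
    have h := expec_succ (s := s) p (fun _ => (1:ℝ))
    simp only [mul_one] at h
    rw [h, ih]
    simp [hp1]

lemma var_sum {n : ℕ} {ι : Type*} [Fintype ι] (p : Fin n → ℝ) (hp1 : ∑ j, p j = 1)
    (Z : Fin n → ι → ℝ) (hZ : ∀ i, ∑ j, p j * Z j i = 0) (s : ℕ) :
    ∑ ω : Fin s → Fin n, (∏ t, p (ω t)) * (∑ i, (∑ t, Z (ω t) i)^2)
      = s * ∑ j, p j * ∑ i, (Z j i)^2 := by
  induction s with
  | zero => simp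
  | succ s ih =>
    rw [expec_succ p (fun ω => ∑ i, (∑ t, Z (ω t) i)^2)]
    have key : ∀ (j : Fin n) (ω : Fin s → Fin n),
        (∑ i, (∑ t : Fin (s+1), Z ((Fin.cons j ω : Fin (s+1) → Fin n) t) i)^2)
          = (∑ i, (Z j i)^2)
            + ((∑ i, 2 * (Z j i * ∑ t : Fin s, Z (ω t) i))
            + ∑ i, (∑ t : Fin s, Z (ω t) i)^2) := by
      intro j ω
      rw [← Finset.sum_add_distrib, ← Finset.sum_add_distrib]
      refine Finset.sum_congr rfl fun i _ => ?_
      rw [Fin.sum_univ_succ]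
      simp only [Fin.cons_zero, Fin.cons_succ]
      ring
    have inner : ∀ j : Fin n,
        (∑ ω : Fin s → Fin n, (∏ t, p (ω t)) *
            (∑ i, (∑ t : Fin (s+1), Z ((Fin.cons j ω : Fin (s+1) → Fin n) t) i)^2))
        = (∑ i, (Z j i)^2)
          + ((∑ i, 2 * (Z j i * ∑ ω : Fin s → Fin n, (∏ t, p (ω t)) * ∑ t, Z (ω t) i))
          + s * ∑ j', p j' * ∑ i, (Z j' i)^2) := by
      intro j
      simp only [key, mul_add, Finset.sum_add_distrib]
      have g1 : (∑ ω : Fin s → Fin n, (∏ t, p (ω t)) * (∑ i, (Z j i)^2))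
          = ∑ i, (Z j i)^2 := by
        rw [← Finset.sum_mul, sum_prod_one p hp1, one_mul]
      have h1 : ∀ ω : Fin s → Fin n,
          (∏ t, p (ω t)) * (∑ i, 2 * (Z j i * ∑ t, Z (ω t) i))
          = ∑ i, 2 * (Z j i * ((∏ t, p (ω t)) * ∑ t, Z (ω t) i)) := by
        intro ω; rw [Finset.mul_sum]
        refine Finset.sum_congr rfl fun i _ => by ring
      have g2 : (∑ ω : Fin s → Fin n, (∏ t, p (ω t)) * (∑ i, 2 * (Z j i * ∑ t, Z (ω t) i)))
          = ∑ i, 2 * (Z j i * ∑ ω : Fin s → Fin n, (∏ t, p (ω t)) * ∑ t, Z (ω t) i) := by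
        simp only [h1]
        rw [Finset.sum_comm]
        refine Finset.sum_congr rfl fun i _ => ?_
        rw [← Finset.mul_sum, ← Finset.mul_sum]
      rw [g1, g2, ih]
    simp only [inner, mul_add, Finset.sum_add_distrib]
    have t2 : (∑ j, p j * (∑ i, 2 * (Z j i *
        ∑ ω : Fin s → Fin n, (∏ t, p (ω t)) * ∑ t, Z (ω t) i))) = 0 := by
      have h1 : ∀ j : Fin n, p j * (∑ i, 2 * (Z j i *
            ∑ ω : Fin s → Fin n, (∏ t, p (ω t)) * ∑ t, Z (ω t) i))
          = ∑ i, 2 * ((∑ ω : Fin s → Fin n, (∏ t, p (ω t)) * ∑ t, Z (ω t) i)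
              * (p j * Z j i)) := by
        intro j; rw [Finset.mul_sum]
        refine Finset.sum_congr rfl fun i _ => by ring
      simp only [h1]
      rw [Finset.sum_comm]
      refine Finset.sum_eq_zero fun i _ => ?_
      rw [← Finset.mul_sum, ← Finset.mul_sum, hZ i]
      ring
    rw [t2]
    have t3 : (∑ j, p j * ((s:ℝ) * ∑ j', p j' * ∑ i, (Z j' i)^2))
        = ∑ j, p j * ((s:ℝ) * ∑ j', p j' * ∑ i, (Z j' i)^2) := rfl
    rw [← Finset.sum_mul, hp1, one_mul]
    push_cast
    ring

lemma core_bound {n : ℕ} {ι : Type*} [Fintype ι] (s : ℕ) (hs : 0 < s)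
    (p : Fin n → ℝ) (hp0 : ∀ j, 0 ≤ p j) (hp1 : ∑ j, p j = 1)
    (v : Fin n → ι → ℝ) (q : Fin n → ℝ) (hq0 : ∀ j, 0 ≤ q j)
    (hq : ∀ j, (∑ i, (v j i)^2) ≤ q j * p j) :
    ∑ ω : Fin s → Fin n, (∏ t, p (ω t)) *
        (∑ i, (∑ t, v (ω t) i / (s * p (ω t)) - ∑ j, v j i)^2)
      ≤ (∑ j, q j) / s := by
  have hsR : (0:ℝ) < s := by exact_mod_cast hs
  have hv0 : ∀ j, p j = 0 → ∀ i, v j i = 0 := by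
    intro j hj i
    have h1 : (∑ i, (v j i)^2) ≤ 0 := by simpa [hj] using hq j
    have h2 : (∑ i, (v j i)^2) = 0 :=
      le_antisymm h1 (Finset.sum_nonneg fun i _ => sq_nonneg _)
    have := (Finset.sum_eq_zero_iff_of_nonneg (fun i _ => sq_nonneg (v j i))).1 h2
      i (Finset.mem_univ i)
    exact pow_eq_zero_iff (by norm_num) |>.1 this
  set w : Fin n → ι → ℝ := fun j i => v j i / (s * p j) with hw
  set mu : ι → ℝ := fun i => (∑ j, v j i) / s with hmu
  have hkey : ∀ j i, p j * w j i = v j i / s := by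
    intro j i
    by_cases hj : p j = 0
    · simp [hw, hj, hv0 j hj i]
    · field_simp [hw]
      rw [hw]; field_simp
  set Z : Fin n → ι → ℝ := fun j i => w j i - mu i with hZdef
  have hZ : ∀ i, ∑ j, p j * Z j i = 0 := by
    intro i
    have : ∀ j, p j * Z j i = v j i / s - p j * mu i := by
      intro j; rw [hZdef]; simp only [mul_sub, hkey]
    simp only [this, Finset.sum_sub_distrib, ← Finset.sum_mul, ← Finset.sum_div]
    rw [hp1, one_mul]
    simp [hmu]
  have hrw : ∀ ω : Fin s → Fin n, ∀ i,
      (∑ t, v (ω t) i / (s * p (ω t)) - ∑ j, v j i) = ∑ t, Z (ω t) i := by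
    intro ω i
    rw [hZdef]
    simp only [Finset.sum_sub_distrib]
    congr 1
    rw [Finset.sum_const, Finset.card_univ, Fintype.card_fin, hmu, nsmul_eq_mul]
    field_simp
  have heq : ∑ ω : Fin s → Fin n, (∏ t, p (ω t)) *
        (∑ i, (∑ t, v (ω t) i / (s * p (ω t)) - ∑ j, v j i)^2)
      = s * ∑ j, p j * ∑ i, (Z j i)^2 := by
    rw [← var_sum p hp1 Z hZ s]
    refine Finset.sum_congr rfl fun ω _ => ?_
    congr 1
    exact Finset.sum_congr rfl fun i _ => by rw [hrw ω i]
  rw [heq]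
  have hvar : (∑ j, p j * ∑ i, (Z j i)^2) ≤ ∑ j, p j * ∑ i, (w j i)^2 := by
    have expand : ∀ j, p j * ∑ i, (Z j i)^2
        = ∑ i, (p j * (w j i)^2 - 2 * (p j * w j i) * mu i + p j * (mu i)^2) := by
      intro j
      rw [Finset.mul_sum]
      refine Finset.sum_congr rfl fun i _ => ?_
      rw [hZdef]; ring
    have expand2 : (∑ j, p j * ∑ i, (Z j i)^2)
        = (∑ j, p j * ∑ i, (w j i)^2) - ∑ i, (mu i)^2 := by
      simp only [expand]
      rw [Finset.sum_comm]
      have : ∀ i, (∑ j, (p j * (w j i)^2 - 2 * (p j * w j i) * mu i + p j * (mu i)^2))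
          = (∑ j, p j * (w j i)^2) - (mu i)^2 := by
        intro i
        simp only [Finset.sum_add_distrib, Finset.sum_sub_distrib]
        have c1 : (∑ j, 2 * (p j * w j i) * mu i) = 2 * (mu i)^2 := by
          have : ∀ j, 2 * (p j * w j i) * mu i = (v j i / s) * (2 * mu i) := by
            intro j; rw [← hkey j i]; ring
          simp only [this, ← Finset.sum_mul, ← Finset.sum_div]
          simp only [hmu]; ring
        have c2 : (∑ j, p j * (mu i)^2) = (mu i)^2 := by
          rw [← Finset.sum_mul, hp1, one_mul]
        rw [c1, c2]; ring
      simp only [this]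
      rw [Finset.sum_sub_distrib]
      congr 1
      rw [Finset.sum_comm]
      exact Finset.sum_congr rfl fun j _ => (Finset.mul_sum _ _ _).symm
    rw [expand2]
    have : (0:ℝ) ≤ ∑ i, (mu i)^2 := Finset.sum_nonneg fun i _ => sq_nonneg _
    linarith
  have hper : ∀ j, p j * ∑ i, (w j i)^2 ≤ q j / s^2 := by
    intro j
    by_cases hj : p j = 0
    · rw [hj, zero_mul]
      exact div_nonneg (hq0 j) (by positivity)
    · have hpj : 0 < p j := lt_of_le_of_ne (hp0 j) (Ne.symm hj)
      have : p j * ∑ i, (w j i)^2 = (∑ i, (v j i)^2) / (s^2 * p j) := by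
        rw [Finset.mul_sum, Finset.sum_div]
        refine Finset.sum_congr rfl fun i _ => ?_
        rw [hw]
        field_simp
      rw [this]
      rw [div_le_div_iff₀ (by positivity) (by positivity)]
      calc (∑ i, (v j i)^2) * s^2 ≤ (q j * p j) * s^2 := by
            have := hq j; nlinarith [sq_nonneg (s:ℝ)]
        _ = q j * (s^2 * p j) := by ring
  calc (s:ℝ) * ∑ j, p j * ∑ i, (Z j i)^2
      ≤ s * ∑ j, p j * ∑ i, (w j i)^2 := by
        apply mul_le_mul_of_nonneg_left hvar (le_of_lt hsR)
    _ ≤ s * ∑ j, q j / s^2 := by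
        apply mul_le_mul_of_nonneg_left (Finset.sum_le_sum fun j _ => hper j) (le_of_lt hsR)
    _ = (∑ j, q j) / s := by
        rw [← Finset.sum_div]
        field_simp


lemma colnorm {n r : ℕ} {U : Matrix (Fin n) (Fin r) ℝ} (hU : Uᵀ * U = 1) (i : Fin r) :
    ∑ j, (U j i)^2 = 1 := by
  have h := congrFun (congrFun hU i) i
  rw [Matrix.mul_apply] at h
  simp only [Matrix.transpose_apply, Matrix.one_apply_eq] at h
  rw [← h]
  exact Finset.sum_congr rfl fun j _ => (sq (U j i)).symm ▸ by ring

lemma rowsq {n d r : ℕ} (U : Matrix (Fin n) (Fin r) ℝ) (V : Matrix (Fin d) (Fin r) ℝ)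
    (dvec : Fin r → ℝ) (hV : Vᵀ * V = 1) (j : Fin n) :
    ∑ c, ((U * Matrix.diagonal dvec * Vᵀ) j c)^2 = ∑ i, (U j i)^2 * (dvec i)^2 := by
  have h1 : ∀ M : Matrix (Fin n) (Fin d) ℝ, ∑ c, (M j c)^2 = (M * Mᵀ) j j := by
    intro M; rw [Matrix.mul_apply]
    exact Finset.sum_congr rfl fun c _ => by simp [Matrix.transpose_apply, sq]
  rw [h1]
  have h2 : (U * Matrix.diagonal dvec * Vᵀ) * (U * Matrix.diagonal dvec * Vᵀ)ᵀ
      = U * (Matrix.diagonal dvec * Matrix.diagonal dvec) * Uᵀ := by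
    rw [Matrix.transpose_mul, Matrix.transpose_mul, Matrix.transpose_transpose,
      Matrix.diagonal_transpose]
    simp only [← Matrix.mul_assoc]
    rw [Matrix.mul_assoc (U * Matrix.diagonal dvec) Vᵀ V, hV, Matrix.mul_one]
  rw [h2, Matrix.diagonal_mul_diagonal]
  rw [Matrix.mul_apply]
  refine Finset.sum_congr rfl fun i _ => ?_
  rw [Matrix.mul_diagonal, Matrix.transpose_apply]
  ring

lemma sumsq_udv {n d r : ℕ} (U : Matrix (Fin n) (Fin r) ℝ) (V : Matrix (Fin d) (Fin r) ℝ)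
    (dvec : Fin r → ℝ) (hU : Uᵀ * U = 1) (hV : Vᵀ * V = 1) :
    ∑ j, ∑ c, ((U * Matrix.diagonal dvec * Vᵀ) j c)^2 = ∑ i, (dvec i)^2 := by
  simp only [rowsq U V dvec hV]
  rw [Finset.sum_comm]
  refine Finset.sum_congr rfl fun i _ => ?_
  rw [← Finset.sum_mul, colnorm hU i, one_mul]


lemma frob_sq {m n : Type*} [Fintype m] [Fintype n] (A : Matrix m n ℝ) :
    frobNorm A ^ 2 = ∑ i, ∑ j, (A i j)^2 := by
  unfold frobNorm
  exact Real.sq_sqrt (Finset.sum_nonneg fun i _ =>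
    Finset.sum_nonneg fun j _ => sq_nonneg _)

lemma sampling_mul_apply {n d s : ℕ} (p : Fin n → ℝ) (ω : Fin s → Fin n)
    (B : Matrix (Fin n) (Fin d) ℝ) (t : Fin s) (c : Fin d) :
    (samplingMatrix p s ω * B) t c = 1 / Real.sqrt (s * p (ω t)) * B (ω t) c := by
  rw [Matrix.mul_apply]
  unfold samplingMatrix
  simp only [ite_mul, zero_mul, Finset.sum_ite_eq', Finset.mem_univ, if_true]

lemma inv_sqrt_sq {x : ℝ} (hx : 0 ≤ x) : (1 / Real.sqrt x)^2 = 1 / x := by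
  rw [div_pow, one_pow, Real.sq_sqrt hx]

lemma frob_WB {n d s : ℕ} (p : Fin n → ℝ) (hp0 : ∀ j, 0 ≤ p j)
    (ω : Fin s → Fin n) (B : Matrix (Fin n) (Fin d) ℝ) :
    frobNorm (samplingMatrix p s ω * B)^2
      = ∑ t, (∑ c, (B (ω t) c)^2) / (s * p (ω t)) := by
  rw [frob_sq]
  refine Finset.sum_congr rfl fun t _ => ?_
  rw [Finset.sum_div]
  refine Finset.sum_congr rfl fun c _ => ?_
  rw [sampling_mul_apply, mul_pow, inv_sqrt_sq (mul_nonneg (Nat.cast_nonneg s) (hp0 (ω t)))]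
  rw [div_eq_mul_inv, div_eq_mul_inv, one_mul]
  ring

lemma BtWtWB_apply {n d s : ℕ} (p : Fin n → ℝ) (hp0 : ∀ j, 0 ≤ p j)
    (ω : Fin s → Fin n) (B : Matrix (Fin n) (Fin d) ℝ) (c c' : Fin d) :
    (Bᵀ * (samplingMatrix p s ω)ᵀ * samplingMatrix p s ω * B) c c'
      = ∑ t, B (ω t) c * B (ω t) c' / (s * p (ω t)) := by
  have h1 : Bᵀ * (samplingMatrix p s ω)ᵀ * samplingMatrix p s ω * B
      = (samplingMatrix p s ω * B)ᵀ * (samplingMatrix p s ω * B) := by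
    rw [Matrix.transpose_mul]
    simp only [Matrix.mul_assoc]
  rw [h1, Matrix.mul_apply]
  refine Finset.sum_congr rfl fun t _ => ?_
  rw [Matrix.transpose_apply, sampling_mul_apply, sampling_mul_apply]
  have h2 := inv_sqrt_sq (mul_nonneg (Nat.cast_nonneg s) (hp0 (ω t)))
  calc 1 / Real.sqrt (↑s * p (ω t)) * B (ω t) c * (1 / Real.sqrt (↑s * p (ω t)) * B (ω t) c')
      = B (ω t) c * B (ω t) c' * (1 / Real.sqrt (↑s * p (ω t)))^2 := by ring
    _ = B (ω t) c * B (ω t) c' / (↑s * p (ω t)) := by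
        rw [h2]; ring

lemma BtB_apply {n d : ℕ} (B : Matrix (Fin n) (Fin d) ℝ) (c c' : Fin d) :
    (Bᵀ * B) c c' = ∑ j, B j c * B j c' := by
  rw [Matrix.mul_apply]
  exact Finset.sum_congr rfl fun j _ => by rw [Matrix.transpose_apply]


lemma part1_bound {n d : ℕ} (s : ℕ) (hs : 0 < s)
    (p : Fin n → ℝ) (hp0 : ∀ j, 0 ≤ p j) (hp1 : ∑ j, p j = 1)
    (B : Matrix (Fin n) (Fin d) ℝ) (q : Fin n → ℝ) (hq0 : ∀ j, 0 ≤ q j)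
    (hq : ∀ j, (∑ c, (B j c)^2)^2 ≤ q j * p j) :
    expec p (fun ω : Fin s → Fin n =>
        (frobNorm (samplingMatrix p s ω * B)^2 - frobNorm B^2)^2)
      ≤ (∑ j, q j) / s := by
  have key := core_bound (ι := Unit) s hs p hp0 hp1 (fun j _ => ∑ c, (B j c)^2) q hq0
    (fun j => by simpa using hq j)
  refine le_trans (le_of_eq ?_) key
  unfold expec
  refine Finset.sum_congr rfl fun ω _ => ?_
  congr 1
  beta_reduce
  rw [Fintype.sum_unique (fun _ : Unit =>
    (∑ t, (∑ c, (B (ω t) c)^2) / (↑s * p (ω t)) - ∑ j, ∑ c, (B j c)^2)^2)]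
  rw [frob_WB p hp0 ω B, frob_sq B]

lemma part2_bound {n d : ℕ} (s : ℕ) (hs : 0 < s)
    (p : Fin n → ℝ) (hp0 : ∀ j, 0 ≤ p j) (hp1 : ∑ j, p j = 1)
    (B : Matrix (Fin n) (Fin d) ℝ) (q : Fin n → ℝ) (hq0 : ∀ j, 0 ≤ q j)
    (hq : ∀ j, (∑ c, (B j c)^2)^2 ≤ q j * p j) :
    expec p (fun ω : Fin s → Fin n =>
        frobNorm (Bᵀ * (samplingMatrix p s ω)ᵀ * samplingMatrix p s ω * B - Bᵀ * B)^2)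
      ≤ (∑ j, q j) / s := by
  have hv : ∀ j, (∑ i : Fin d × Fin d, (B j i.1 * B j i.2)^2) = (∑ c, (B j c)^2)^2 := by
    intro j
    rw [Fintype.sum_prod_type, sq (∑ c, (B j c)^2), Finset.sum_mul_sum]
    exact Finset.sum_congr rfl fun c _ => Finset.sum_congr rfl fun c' _ => by ring
  have key := core_bound (ι := Fin d × Fin d) s hs p hp0 hp1
    (fun j i => B j i.1 * B j i.2) q hq0
    (fun j => by rw [hv j]; exact hq j)
  refine le_trans (le_of_eq ?_) key
  unfold expec
  refine Finset.sum_congr rfl fun ω _ => ?_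
  congr 1
  beta_reduce
  rw [frob_sq, Fintype.sum_prod_type]
  refine Finset.sum_congr rfl fun i _ => ?_
  refine Finset.sum_congr rfl fun i' _ => ?_
  rw [Matrix.sub_apply, BtWtWB_apply p hp0 ω B, BtB_apply]

lemma residual_form {n d r : ℕ} (A : Matrix (Fin n) (Fin d) ℝ)
    (U : Matrix (Fin n) (Fin r) ℝ) (V : Matrix (Fin d) (Fin r) ℝ) (σ : Fin r → ℝ) (m : ℕ)
    (hA : A = U * Matrix.diagonal σ * Vᵀ) :
    A - U * truncDiag σ m * Vᵀ
      = U * Matrix.diagonal (fun i : Fin r => if (i:ℕ) < m then 0 else σ i) * Vᵀ := by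
  unfold truncDiag
  rw [hA, ← Matrix.sub_mul, ← Matrix.mul_sub, Matrix.diagonal_sub]
  have : (fun i : Fin r => σ i - if (i:ℕ) < m then σ i else 0)
      = (fun i : Fin r => if (i:ℕ) < m then 0 else σ i) := by
    funext i; by_cases h : (i:ℕ) < m <;> simp [h]
  rw [this]

lemma mini_A {u a l : ℝ} (hu : 0 ≤ u) (ha : 0 ≤ a) (hal : a ≤ l) :
    u * a * (a + l) ≤ 2 * l * u * a := by
  nlinarith [mul_nonneg (mul_nonneg hu ha) (sub_nonneg.2 hal)]

lemma mini_C {x y : ℝ} (h : x ≤ y) (hx : 0 ≤ x) : x^2 ≤ y * x := by nlinarith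

lemma mini_D {l pj dt f kk : ℝ} (hl : 0 ≤ l) (hp : 0 ≤ pj) (hf : 0 ≤ f)
    (hdt : dt ≤ 2 * kk) : 2 * l * (pj * dt) * f ≤ 4 * l * kk * (f * pj) := by
  nlinarith [mul_nonneg (mul_nonneg (mul_nonneg hl hp) hf) (sub_nonneg.2 hdt)]

set_option maxHeartbeats 1000000 in
/-- ridge leverage score sampling, residual-term expectation bounds. -/
theorem stmt_17 {n d r : ℕ} {k m : ℕ} (s : ℕ) (hs : 0 < s)
    (A : Matrix (Fin n) (Fin d) ℝ)
    (U : Matrix (Fin n) (Fin r) ℝ) (V : Matrix (Fin d) (Fin r) ℝ) (σ : Fin r → ℝ)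
    (hU : Uᵀ * U = 1) (hV : Vᵀ * V = 1)
    (hσdec : ∀ i j : Fin r, i ≤ j → σ j ≤ σ i) (hσpos : ∀ i, 0 < σ i)
    (hA : A = U * Matrix.diagonal σ * Vᵀ) (hrank : A.rank = r)
    (hk1 : 1 ≤ k) (hkr : k < r)
    (lam : ℝ) (hlam : lam = frobNorm (A - U * truncDiag σ k * Vᵀ) ^ 2 / k)
    (hm1 : 1 ≤ m) (hmr : m ≤ r)
    (hσm : lam ≤ σ ⟨m - 1, by omega⟩ ^ 2)
    (hσm1 : ∀ h : m < r, σ ⟨m, h⟩ ^ 2 ≤ lam)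
    (p : Fin n → ℝ)
    (hpdef : ∀ i, p i = (∑ j, ((U * ridgeDiag σ lam) i j) ^ 2)
        / (∑ i', ∑ j, ((U * ridgeDiag σ lam) i' j) ^ 2)) :
    expec p (fun (ω : Fin s → Fin n) =>
        (frobNorm (samplingMatrix p s ω * (A - U * truncDiag σ m * Vᵀ)) ^ 2
          - frobNorm (A - U * truncDiag σ m * Vᵀ) ^ 2) ^ 2)
      ≤ 8 / s * frobNorm (A - U * truncDiag σ k * Vᵀ) ^ 4
    ∧ expec p (fun (ω : Fin s → Fin n) =>
        frobNorm ((A - U * truncDiag σ m * Vᵀ)ᵀ * (samplingMatrix p s ω)ᵀ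
          * samplingMatrix p s ω * (A - U * truncDiag σ m * Vᵀ)
          - (A - U * truncDiag σ m * Vᵀ)ᵀ * (A - U * truncDiag σ m * Vᵀ)) ^ 2)
      ≤ 8 / s * frobNorm (A - U * truncDiag σ k * Vᵀ) ^ 4 := by
  -- notation
  set B : Matrix (Fin n) (Fin d) ℝ := A - U * truncDiag σ m * Vᵀ with hBdef
  set Bk : Matrix (Fin n) (Fin d) ℝ := A - U * truncDiag σ k * Vᵀ with hBkdef
  set dm : Fin r → ℝ := fun i => if (i:ℕ) < m then 0 else σ i with hdm
  set dk : Fin r → ℝ := fun i => if (i:ℕ) < k then 0 else σ i with hdk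
  have hB : B = U * Matrix.diagonal dm * Vᵀ := residual_form A U V σ m hA
  have hBk : Bk = U * Matrix.diagonal dk * Vᵀ := residual_form A U V σ k hA
  set Fk2 : ℝ := ∑ i, (dk i)^2 with hFk2
  have hfrobBk : frobNorm Bk ^ 2 = Fk2 := by
    rw [frob_sq, hBk, sumsq_udv U V dk hU hV]
  -- basic positivity
  have hFk2pos : 0 < Fk2 := by
    have hmem : (⟨k, hkr⟩ : Fin r) ∈ Finset.univ := Finset.mem_univ _
    have h1 : (dk ⟨k, hkr⟩)^2 ≤ Fk2 :=
      Finset.single_le_sum (fun i _ => sq_nonneg (dk i)) hmem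
    have h2 : dk ⟨k, hkr⟩ = σ ⟨k, hkr⟩ := by simp [hdk]
    rw [h2] at h1
    exact lt_of_lt_of_le (pow_pos (hσpos ⟨k, hkr⟩) 2) h1
  have hkR : (0:ℝ) < k := by exact_mod_cast hk1
  have hlamk : lam * k = Fk2 := by
    rw [hlam, hfrobBk]; field_simp
  have hlampos : 0 < lam := by
    rw [hlam, hfrobBk]; exact div_pos hFk2pos hkR
  -- σ_i^2 ≤ lam for i ≥ m
  have hσlam : ∀ i : Fin r, m ≤ (i:ℕ) → σ i ^ 2 ≤ lam := by
    intro i hi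
    have hmr' : m < r := lt_of_le_of_lt hi i.isLt
    have h1 := hσm1 hmr'
    have h2 : σ i ≤ σ ⟨m, hmr'⟩ := hσdec ⟨m, hmr'⟩ i (by simpa [Fin.le_def] using hi)
    have h3 : σ i ^ 2 ≤ σ ⟨m, hmr'⟩ ^ 2 :=
      pow_le_pow_left₀ (le_of_lt (hσpos i)) h2 2
    linarith
  -- leverage scores
  set τ : Fin n → ℝ := fun j => ∑ c, ((U * ridgeDiag σ lam) j c)^2 with hτdef
  have hτ : ∀ j, τ j = ∑ i, (U j i)^2 * (σ i ^2 / (σ i ^2 + lam)) := by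
    intro j
    rw [hτdef]
    refine Finset.sum_congr rfl fun c _ => ?_
    unfold ridgeDiag
    rw [Matrix.mul_diagonal]
    rw [mul_pow, div_pow, Real.sq_sqrt (by nlinarith [sq_nonneg (σ c)] : (0:ℝ) ≤ σ c ^ 2 + lam)]
  have hτ0 : ∀ j, 0 ≤ τ j := fun j =>
    Finset.sum_nonneg fun c _ => sq_nonneg _
  set dtot : ℝ := ∑ j, τ j with hdtot
  have hdtot_eq : dtot = ∑ i : Fin r, σ i ^2 / (σ i ^2 + lam) := by
    rw [hdtot]
    simp only [hτ]
    rw [Finset.sum_comm]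
    refine Finset.sum_congr rfl fun i _ => ?_
    rw [← Finset.sum_mul, colnorm hU i, one_mul]
  have hdtot_pos : 0 < dtot := by
    rw [hdtot_eq]
    refine Finset.sum_pos (fun i _ => ?_) ⟨⟨0, by omega⟩, Finset.mem_univ _⟩
    exact div_pos (pow_pos (hσpos i) 2) (by nlinarith [sq_nonneg (σ i)])
  have hcard : ((Finset.univ.filter fun i : Fin r => (i:ℕ) < k).card : ℝ) ≤ k := by
    have : (Finset.univ.filter fun i : Fin r => (i:ℕ) < k).card ≤ k := by
      have hle : (Finset.univ.filter fun i : Fin r => (i:ℕ) < k).card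
          ≤ (Finset.univ : Finset (Fin k)).card := by
        apply Finset.card_le_card_of_injOn
          (fun i : Fin r => (⟨(i:ℕ) % k, Nat.mod_lt _ (by omega)⟩ : Fin k))
        · exact fun a _ => Finset.mem_univ _
        · intro a ha b hb hab
          simp only [Finset.mem_coe, Finset.mem_filter] at ha hb
          have ha' : (a:ℕ) % k = (a:ℕ) := Nat.mod_eq_of_lt ha.2
          have hb' : (b:ℕ) % k = (b:ℕ) := Nat.mod_eq_of_lt hb.2
          have := congrArg Fin.val hab
          simp only [ha', hb'] at this
          exact Fin.ext this
      simpa using hle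
    exact_mod_cast this
  have hsum_dk : ∑ i : Fin r, (dk i)^2
      = ∑ i ∈ Finset.univ.filter (fun i : Fin r => ¬ (i:ℕ) < k), σ i ^2 := by
    rw [Finset.sum_filter]
    refine Finset.sum_congr rfl fun i _ => ?_
    by_cases h : (i:ℕ) < k <;> simp [hdk, h]
  have hdtot_le : dtot ≤ 2 * k := by
    rw [hdtot_eq,
      ← Finset.sum_filter_add_sum_filter_not Finset.univ (fun i : Fin r => (i:ℕ) < k)]
    have hA1 : ∑ i ∈ Finset.univ.filter (fun i : Fin r => (i:ℕ) < k),
        σ i ^2 / (σ i ^2 + lam) ≤ k := by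
      calc ∑ i ∈ Finset.univ.filter (fun i : Fin r => (i:ℕ) < k), σ i ^2 / (σ i ^2 + lam)
          ≤ ∑ _i ∈ Finset.univ.filter (fun i : Fin r => (i:ℕ) < k), (1:ℝ) := by
            refine Finset.sum_le_sum fun i _ => ?_
            rw [div_le_one (by positivity)]
            linarith
        _ = ((Finset.univ.filter fun i : Fin r => (i:ℕ) < k).card : ℝ) := by
            rw [Finset.sum_const, nsmul_eq_mul, mul_one]
        _ ≤ k := hcard
    have hA2 : ∑ i ∈ Finset.univ.filter (fun i : Fin r => ¬ (i:ℕ) < k),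
        σ i ^2 / (σ i ^2 + lam) ≤ k := by
      calc ∑ i ∈ Finset.univ.filter (fun i : Fin r => ¬ (i:ℕ) < k), σ i ^2 / (σ i ^2 + lam)
          ≤ ∑ i ∈ Finset.univ.filter (fun i : Fin r => ¬ (i:ℕ) < k), σ i ^2 / lam := by
            refine Finset.sum_le_sum fun i _ => ?_
            gcongr
            linarith [sq_nonneg (σ i)]
        _ = Fk2 / lam := by rw [← Finset.sum_div, hFk2, hsum_dk]
        _ = k := by rw [← hlamk]; field_simp
    linarith
  -- probabilities
  have hp : ∀ j, p j = τ j / dtot := fun j => hpdef j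
  have hp0 : ∀ j, 0 ≤ p j := fun j => by
    rw [hp j]; exact div_nonneg (hτ0 j) (le_of_lt hdtot_pos)
  have hp1 : ∑ j, p j = 1 := by
    simp only [hp]
    rw [← Finset.sum_div, ← hdtot, div_self (ne_of_gt hdtot_pos)]
  -- the row norms of B
  set f : Fin n → ℝ := fun j => ∑ c, (B j c)^2 with hfdef
  have hf : ∀ j, f j = ∑ i, (U j i)^2 * (dm i)^2 := by
    intro j; rw [hfdef]
    simp only [hB]
    exact rowsq U V dm hV j
  have hf0 : ∀ j, 0 ≤ f j := fun j =>
    Finset.sum_nonneg fun c _ => sq_nonneg _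
  have hfτ : ∀ j, f j ≤ 2 * lam * τ j := by
    intro j
    rw [hf j, hτ j, Finset.mul_sum]
    refine Finset.sum_le_sum fun i _ => ?_
    by_cases h : (i:ℕ) < m
    · have : dm i = 0 := by simp [hdm, h]
      rw [this]
      have h1 : 0 < σ i ^2 + lam := by linarith [sq_nonneg (σ i)]
      have h2 : 0 ≤ σ i ^2 / (σ i ^2 + lam) := div_nonneg (sq_nonneg _) (le_of_lt h1)
      have h3 := mul_nonneg (sq_nonneg (U j i)) h2
      have h5 : 0 ≤ 2 * lam * ((U j i)^2 * (σ i ^2 / (σ i ^2 + lam))) :=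
        mul_nonneg (by linarith) h3
      simpa using h5
    · have hdmi : dm i = σ i := by simp [hdm, h]
      rw [hdmi]
      have hle : σ i ^2 ≤ lam := hσlam i (by omega)
      have hpos : 0 < σ i ^2 + lam := by linarith [sq_nonneg (σ i)]
      have key : 2*lam*((U j i)^2 * (σ i^2/(σ i^2+lam)))
          = (2*lam*(U j i)^2*σ i^2)/(σ i^2+lam) := by ring
      rw [key, le_div_iff₀ hpos]
      exact mini_A (sq_nonneg (U j i)) (sq_nonneg (σ i)) hle
  -- the q function
  set q : Fin n → ℝ := fun j => 4 * lam * k * f j with hqdef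
  have hq0 : ∀ j, 0 ≤ q j := fun j =>
    mul_nonneg (mul_nonneg (mul_nonneg (by norm_num) hlampos.le) (Nat.cast_nonneg k)) (hf0 j)
  have hq : ∀ j, f j ^ 2 ≤ q j * p j := by
    intro j
    have hτp : τ j = p j * dtot := by
      rw [hp j, div_mul_cancel₀ _ (ne_of_gt hdtot_pos)]
    have h1 : f j ^2 ≤ (2 * lam * τ j) * f j := mini_C (hfτ j) (hf0 j)
    have h2 : (2 * lam * τ j) * f j ≤ q j * p j := by
      have e1 : q j * p j = 4*lam*(k:ℝ)*(f j * p j) := by simp only [hqdef]; ring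
      rw [e1, hτp]
      exact mini_D hlampos.le (hp0 j) (hf0 j) hdtot_le
    linarith
  -- sum of q
  have hsumf : ∑ j, f j = ∑ i, (dm i)^2 := by
    simp only [hfdef, hB]
    exact sumsq_udv U V dm hU hV
  have hdm_le : ∑ i, (dm i)^2 ≤ 2 * Fk2 := by
    have hpt : ∀ i : Fin r, (dm i)^2 ≤ (dk i)^2 + (if (i:ℕ) < k then lam else 0) := by
      intro i
      by_cases hm' : (i:ℕ) < m
      · have : dm i = 0 := by simp [hdm, hm']
        rw [this]
        have h4 : (0:ℝ) ≤ (if (i:ℕ) < k then lam else 0) := by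
          by_cases hk' : (i:ℕ) < k
          · rw [if_pos hk']; exact hlampos.le
          · rw [if_neg hk']
        calc (0:ℝ)^2 = 0 := by norm_num
          _ ≤ dk i ^2 + (if (i:ℕ) < k then lam else 0) := by
              linarith [sq_nonneg (dk i)]
      · have hdmi : dm i = σ i := by simp [hdm, hm']
        by_cases hk' : (i:ℕ) < k
        · have : dk i = 0 := by simp [hdk, hk']
          rw [hdmi, this, if_pos hk']
          have h6 := hσlam i (by omega)
          have : (0:ℝ)^2 = 0 := by norm_num
          rw [this]
          linarith
        · have : dk i = σ i := by simp [hdk, hk']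
          rw [hdmi, this, if_neg hk']
          simp
    calc ∑ i, (dm i)^2 ≤ ∑ i, ((dk i)^2 + (if (i:ℕ) < k then lam else 0)) :=
          Finset.sum_le_sum fun i _ => hpt i
      _ = Fk2 + ∑ i : Fin r, (if (i:ℕ) < k then lam else 0) := by
          rw [Finset.sum_add_distrib, ← hFk2]
      _ ≤ Fk2 + k * lam := by
          have : ∑ i : Fin r, (if (i:ℕ) < k then lam else 0)
              = ((Finset.univ.filter fun i : Fin r => (i:ℕ) < k).card : ℝ) * lam := by
            rw [← Finset.sum_filter, Finset.sum_const, nsmul_eq_mul]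
          rw [this]
          have := mul_le_mul_of_nonneg_right hcard (le_of_lt hlampos)
          linarith
      _ = 2 * Fk2 := by linarith [hlamk]
  have hsumq : ∑ j, q j ≤ 8 * Fk2^2 := by
    have : ∑ j, q j = 4 * lam * k * ∑ j, f j := by
      rw [hqdef, Finset.mul_sum]
    rw [this, hsumf]
    have h1 : 4 * lam * k * ∑ i, (dm i)^2 ≤ 4 * lam * k * (2 * Fk2) := by
      apply mul_le_mul_of_nonneg_left hdm_le
      have hk0 : (0:ℝ) ≤ (k:ℝ) := Nat.cast_nonneg k
      nlinarith [mul_nonneg hlampos.le hk0]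
    have h2 : 4 * lam * (k:ℝ) * (2 * Fk2) = 8 * Fk2^2 := by rw [← hlamk]; ring
    linarith
  -- final glue
  have hsR : (0:ℝ) < (s:ℝ) := by exact_mod_cast hs
  have bound1 := part1_bound s hs p hp0 hp1 B q hq0 (fun j => hq j)
  have bound2 := part2_bound s hs p hp0 hp1 B q hq0 (fun j => hq j)
  have hfinal : (∑ j, q j) / s ≤ 8 / s * frobNorm Bk ^ 4 := by
    have h4 : frobNorm Bk ^ 4 = Fk2^2 := by
      rw [show (4:ℕ) = 2*2 from rfl, pow_mul, hfrobBk]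
    have h5 : 8 / (s:ℝ) * Fk2^2 = (8*Fk2^2)/s := by ring
    rw [h4, h5]
    exact div_le_div_of_nonneg_right hsumq hsR.le
  exact ⟨le_trans bound1 hfinal, le_trans bound2 hfinal⟩
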